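/- Let m > 0 and (a_i)_{i≥0} be a non-decreasing sequence of naturals with a_i → ∞. If ∑_{i≥0} (m+1)^{-a_i} < ∞, then there exists α > 0 such that ∏_{i=1}^n ρ(a_i) / (m+1)^n → α as n → ∞. -/

import Mathlib

open Filter

/-- Let `m > 0` and `(a i)` a non-decreasing sequence of naturals with
`a i → ∞`. If `∑ (m+1)^(-a i) < ∞`, then there exists `α > 0` such that
`∏_{i=1}^n ρ (a i) / (m+1)^n → α` as `n → ∞`. -/
theorem stmt4 (m : ℝ) (hm : 0 < m) (a : ℕ → ℕ) (hamono : Monotone a)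
    (hainf : Tendsto a atTop atTop)
    (ρ : ℕ → ℝ) (hpos : ∀ b, 0 < ρ b)
    (hroot : ∀ b, (ρ b) ^ (b + 1) = m * ∑ k ∈ Finset.range (b + 1), (ρ b) ^ k)
    (hconv : Summable (fun i : ℕ => ((m + 1 : ℝ))⁻¹ ^ (a i))) :
    ∃ α : ℝ, 0 < α ∧
      Tendsto (fun n : ℕ => (∏ i ∈ Finset.Icc 1 n, ρ (a i)) / (m + 1 : ℝ) ^ n)
        atTop (nhds α) := by
  set M : ℝ := m + 1 with hM
  have hM1 : 1 < M := by simp only [hM]; linarith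
  have hM0 : 0 < M := by linarith
  -- key algebraic identity : (M - ρ b) * ρ b ^ (b+1) = m
  have hid : ∀ b, (M - ρ b) * (ρ b) ^ (b + 1) = m := by
    intro b
    have hg := geom_sum_mul (ρ b) (b + 1)
    have hr := hroot b
    have : (ρ b - 1) * (ρ b) ^ (b + 1) = m * ((ρ b) ^ (b + 1) - 1) := by
      calc (ρ b - 1) * (ρ b) ^ (b + 1)
          = (ρ b - 1) * (m * ∑ k ∈ Finset.range (b + 1), (ρ b) ^ k) := by rw [← hr]
        _ = m * ((∑ k ∈ Finset.range (b + 1), (ρ b) ^ k) * (ρ b - 1)) := by ring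
        _ = m * ((ρ b) ^ (b + 1) - 1) := by rw [hg]
    rw [hM]
    linear_combination -this
  have hlt : ∀ b, ρ b < M := by
    intro b
    have h := hid b
    have hp : 0 < ρ b ^ (b + 1) := pow_pos (hpos b) _
    nlinarith
  -- if m*(b+1) > 1 then ρ b > 1
  have hgt1 : ∀ b : ℕ, 1 < m * ((b:ℝ) + 1) → 1 < ρ b := by
    intro b hb
    by_contra h
    push_neg at h
    have hterm : ∀ k ∈ Finset.range (b + 1), ρ b ^ b ≤ ρ b ^ k := by
      intro k hk
      exact pow_le_pow_of_le_one (hpos b).le h (Nat.lt_succ_iff.mp (Finset.mem_range.mp hk))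
    have hsum : (b + 1 : ℝ) * ρ b ^ b ≤ ∑ k ∈ Finset.range (b + 1), ρ b ^ k := by
      calc (b + 1 : ℝ) * ρ b ^ b = ∑ _k ∈ Finset.range (b + 1), ρ b ^ b := by
            rw [Finset.sum_const, Finset.card_range]; push_cast; ring
        _ ≤ _ := Finset.sum_le_sum hterm
    have hr := hroot b
    have hpb : 0 < ρ b ^ b := pow_pos (hpos b) _
    have h1 : ρ b ^ (b + 1) ≤ ρ b ^ b := pow_le_pow_of_le_one (hpos b).le h (Nat.le_succ b)
    nlinarith [mul_le_mul_of_nonneg_left hsum hm.le]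
  -- if ρ b > 1 then ρ b ^ (b+1) ≥ m*(b+1)
  have hpow_lb : ∀ b : ℕ, 1 < ρ b → m * ((b:ℝ) + 1) ≤ ρ b ^ (b + 1) := by
    intro b hb
    have hterm : ∀ k ∈ Finset.range (b + 1), (1 : ℝ) ≤ ρ b ^ k := by
      intro k _
      exact one_le_pow₀ hb.le
    have hsum : (b + 1 : ℝ) ≤ ∑ k ∈ Finset.range (b + 1), ρ b ^ k := by
      calc (b + 1 : ℝ) = ∑ _k ∈ Finset.range (b + 1), (1 : ℝ) := by
            rw [Finset.sum_const, Finset.card_range]; push_cast; ring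
        _ ≤ _ := Finset.sum_le_sum hterm
    rw [hroot b]
    exact mul_le_mul_of_nonneg_left hsum hm.le
  -- key bound : M - ρ b ≤ M⁻¹ ^ b when m*(b+1) > 1
  have hkey : ∀ b : ℕ, 1 < m * ((b:ℝ) + 1) → M - ρ b ≤ M⁻¹ ^ b := by
    intro b hb
    have h1 := hgt1 b hb
    have h2 := hpow_lb b h1
    have hid' := hid b
    have hρp : 0 < ρ b ^ (b + 1) := pow_pos (hpos b) _
    set t : ℝ := 1 / (M * ((b:ℝ) + 1)) with ht
    have hb1 : (0:ℝ) < (b:ℝ) + 1 := by positivity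
    have ht0 : 0 < t := by positivity
    have ht1 : t < 1 := by
      rw [ht, div_lt_one (by positivity)]
      nlinarith
    -- ρ b / M = 1 - m/(M * ρ^{b+1}) ≥ 1 - t
    have hrepr : ρ b / M = 1 - m / (M * ρ b ^ (b + 1)) := by
      field_simp
      nlinarith [hid']
    have hfrac : m / (M * ρ b ^ (b + 1)) ≤ t := by
      rw [ht, div_le_div_iff₀ (by positivity) (by positivity)]
      nlinarith [h2]
    have hxlb : 1 - t ≤ ρ b / M := by rw [hrepr]; linarith
    have hbern : 1 - ((b:ℝ) + 1) * t ≤ (1 - t) ^ (b + 1) := by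
      have h := one_add_mul_le_pow (a := -t) (by linarith) (b + 1)
      have e1 : (1 : ℝ) + -t = 1 - t := by ring
      rw [e1] at h
      push_cast at h
      linarith
    have hpowle : (1 - t) ^ (b + 1) ≤ (ρ b / M) ^ (b + 1) :=
      pow_le_pow_left₀ (by linarith) hxlb _
    have hts : ((b:ℝ) + 1) * t = 1 / M := by
      rw [ht]; field_simp
    have h3 : m * M ^ b ≤ ρ b ^ (b + 1) := by
      have h4 : m / M ≤ (ρ b / M) ^ (b + 1) := by
        have : 1 - 1 / M = m / M := by rw [hM]; field_simp; ring
        rw [← this]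
        calc 1 - 1 / M = 1 - ((b:ℝ) + 1) * t := by rw [hts]
          _ ≤ (1 - t) ^ (b + 1) := hbern
          _ ≤ _ := hpowle
      rw [div_pow, div_le_div_iff₀ hM0 (by positivity)] at h4
      have e2 : m * M ^ (b + 1) = m * M ^ b * M := by ring
      rw [e2] at h4
      exact le_of_mul_le_mul_right h4 hM0
    have h5 : M - ρ b = m / ρ b ^ (b + 1) := by
      field_simp
      linarith [hid']
    rw [h5, inv_pow, inv_eq_one_div, div_le_div_iff₀ hρp (by positivity)]
    nlinarith [h3]
  -- the log terms
  set f : ℕ → ℝ := fun i => Real.log (ρ (a i) / M) with hf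
  have hxpos : ∀ i, 0 < ρ (a i) / M := fun i => div_pos (hpos _) hM0
  -- eventual bound on ‖f i‖
  have hacast : Tendsto (fun i => ((a i : ℝ))) atTop atTop :=
    tendsto_natCast_atTop_atTop.comp hainf
  have hev1 : ∀ᶠ i in atTop, 1 < m * ((a i : ℝ) + 1) := by
    have h1 : Tendsto (fun i => m * ((a i : ℝ) + 1)) atTop atTop := by
      apply Tendsto.const_mul_atTop hm
      exact tendsto_atTop_add_const_right _ 1 hacast
    exact h1.eventually_gt_atTop 1
  have htend0 : Tendsto (fun i => M⁻¹ ^ (a i)) atTop (nhds 0) :=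
    (tendsto_pow_atTop_nhds_zero_of_lt_one (by positivity) (inv_lt_one_of_one_lt₀ hM1)).comp hainf
  have hev2 : ∀ᶠ i in atTop, M⁻¹ ^ (a i) < M / 2 :=
    htend0.eventually_lt_const (by positivity)
  have hbound : ∀ᶠ i in atTop, ‖f i‖ ≤ 2 * M⁻¹ ^ (a i) := by
    filter_upwards [hev1, hev2] with i h1 h2
    set x : ℝ := ρ (a i) / M with hx
    have hx0 : 0 < x := hxpos i
    have hx1 : x < 1 := (div_lt_one hM0).mpr (hlt (a i))
    have hub : 1 - x ≤ M⁻¹ ^ (a i) / M := by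
      have hk := hkey (a i) h1
      calc 1 - x = (M - ρ (a i)) / M := by rw [hx, sub_div, div_self hM0.ne']
        _ ≤ M⁻¹ ^ (a i) / M := by gcongr
    have hub2 : 1 - x ≤ M⁻¹ ^ (a i) := by
      have : M⁻¹ ^ (a i) / M ≤ M⁻¹ ^ (a i) := by
        rw [div_le_iff₀ hM0]
        nlinarith [pow_pos (show (0:ℝ) < M⁻¹ by positivity) (a i), hM1]
      linarith
    have hxhalf : 1 / 2 < x := by
      have : M⁻¹ ^ (a i) / M < 1 / 2 := by
        rw [div_lt_div_iff₀ hM0 (by norm_num)]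
        nlinarith
      linarith
    have hnorm : ‖f i‖ = -Real.log x := by
      rw [hf]
      simp only [← hx]
      rw [Real.norm_eq_abs, abs_of_nonpos (Real.log_nonpos hx0.le hx1.le)]
    have hlog : -Real.log x ≤ 1 / x - 1 := by
      have h := Real.log_le_sub_one_of_pos (x := x⁻¹) (by positivity)
      rw [Real.log_inv] at h
      rw [inv_eq_one_div] at h
      linarith
    have key2 : 1 / x ≤ 3 - 2 * x := by
      rw [div_le_iff₀ hx0]
      nlinarith
    rw [hnorm]
    calc -Real.log x ≤ 1 / x - 1 := hlog
      _ ≤ 2 * (1 - x) := by linarith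
      _ ≤ 2 * M⁻¹ ^ (a i) := by linarith
  have hsumf : Summable f := by
    apply Summable.of_norm_bounded_eventually (hconv.mul_left 2)
    rwa [Nat.cofinite_eq_atTop]
  -- conclude
  have hS : Tendsto (fun n => ∑ i ∈ Finset.range n, f i) atTop (nhds (∑' i, f i)) :=
    hsumf.hasSum.tendsto_sum_nat
  have hsplit : ∀ n : ℕ, ∑ i ∈ Finset.Icc 1 n, f i = ∑ i ∈ Finset.range (n + 1), f i - f 0 := by
    intro n
    rw [Finset.sum_range_succ' f n]
    have : Finset.Icc 1 n = Finset.Ico 1 (n + 1) := by rw [Finset.Ico_add_one_right_eq_Icc]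
    rw [this, Finset.sum_Ico_eq_sum_range]
    simp [add_comm]
  have h1 : Tendsto (fun n => ∑ i ∈ Finset.Icc 1 n, f i) atTop (nhds (∑' i, f i - f 0)) := by
    have h2 : Tendsto (fun n => ∑ i ∈ Finset.range (n + 1), f i) atTop (nhds (∑' i, f i)) :=
      hS.comp (tendsto_add_atTop_nat 1)
    have h3 := h2.sub_const (f 0)
    exact Tendsto.congr (fun n => (hsplit n).symm) h3
  refine ⟨Real.exp (∑' i, f i - f 0), Real.exp_pos _, ?_⟩
  have heq : ∀ n : ℕ, (∏ i ∈ Finset.Icc 1 n, ρ (a i)) / M ^ n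
      = Real.exp (∑ i ∈ Finset.Icc 1 n, f i) := by
    intro n
    have hterm : ∀ i ∈ Finset.Icc 1 n, Real.exp (f i) = ρ (a i) / M :=
      fun i _ => Real.exp_log (hxpos i)
    rw [Real.exp_sum, Finset.prod_congr rfl hterm, Finset.prod_div_distrib,
      Finset.prod_const, Nat.card_Icc]
    simp
  have hfin := (Real.continuous_exp.tendsto (∑' i, f i - f 0)).comp h1
  exact Tendsto.congr (fun n => (heq n).symm) hfin
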